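/- Let $I$ be an index set partitioned as $I^{re} \sqcup I^{im}$, and let $w = v_l r_{j_l} \cdots v_1 r_{j_1} v_0$ be a word with $j_1, \ldots, j_l \in I^{im}$ and $v_0, \ldots, v_l$ words in $\{r_j\}_{j \in I^{re}}$, acting on $\mathfrak{h}^*$ via $r_j(\mu) = \mu - \alpha_j^\vee(\mu)\alpha_j$. Suppose $\lambda$ is dominant and the expression satisfies: $\alpha_{j_s}^\vee(v_{s-1}r_{j_{s-1}}\cdots v_1 r_{j_1}v_0(\lambda)) = 1$ for all $s$, and every prefix preserves positivity in the sense that $\alpha_{j_s}^\vee$ paired with each intermediate weight is positive. If $j_s = j_t =: j$ for some $s > t$, then $a_{jj} = \alpha_j^\vee(\alpha_j) = 0$. -/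
import Mathlib


/-- Let `w` be a word in the generators `r_j` (given as a list of
indices, applied left-to-right to a dominant weight `λ`) in the Borcherds–Cartan
setting: off-diagonal pairings are `≤ 0`, imaginary diagonal entries are `≤ 0`.
Suppose each letter is applied with nonnegative pairing (positivity of the
prefixes), and each imaginary letter is applied with pairing exactly `1`. If an
imaginary index `j` is repeated in the word, then `a_{jj} = α_j^∨(α_j) = 0`. -/
theorem stmt_16 (V : Type*) [AddCommGroup V] [Module ℝ V] (I : Type*)
    (Ire : Set I) (α : I → V) (coroot : I → (V →ₗ[ℝ] ℝ))
    (hBC : ∀ j k, j ≠ k → coroot j (α k) ≤ 0)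
    (himdiag : ∀ j, j ∉ Ire → coroot j (α j) ≤ 0)
    (l : List I) (lam : V) (hdom : ∀ j, 0 ≤ coroot j lam)
    (mu : ℕ → V)
    (hmu : ∀ n, mu n = (l.take n).foldl (fun μ j => μ - coroot j μ • α j) lam)
    (hpos : ∀ (n : ℕ) (h : n < l.length), 0 ≤ coroot (l.get ⟨n, h⟩) (mu n))
    (him1 : ∀ (n : ℕ) (h : n < l.length), l.get ⟨n, h⟩ ∉ Ire →
      coroot (l.get ⟨n, h⟩) (mu n) = 1) :
    ∀ (s t : ℕ) (hs : s < l.length) (ht : t < l.length), t < s →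
      l.get ⟨s, hs⟩ = l.get ⟨t, ht⟩ → l.get ⟨s, hs⟩ ∉ Ire →
      coroot (l.get ⟨s, hs⟩) (α (l.get ⟨s, hs⟩)) = 0 := by
  intro s t hs ht hts heq him
  set j := l.get ⟨s, hs⟩ with hj
  -- step formula
  have hstep : ∀ (n : ℕ) (h : n < l.length),
      mu (n + 1) = mu n - coroot (l.get ⟨n, h⟩) (mu n) • α (l.get ⟨n, h⟩) := by
    intro n h
    rw [hmu (n + 1), hmu n, List.take_succ, List.foldl_append,
      List.getElem?_eq_getElem h]
    rfl
  -- coroot j of any α is ≤ 0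
  have hneg : ∀ k, coroot j (α k) ≤ 0 := by
    intro k
    by_cases hk : j = k
    · subst hk; exact himdiag j him
    · exact hBC j k hk
  -- monotonicity
  have hmono : ∀ (n : ℕ), n < l.length → coroot j (mu n) ≤ coroot j (mu (n + 1)) := by
    intro n h
    rw [hstep n h]
    simp only [map_sub, map_smul, smul_eq_mul]
    have : coroot (l.get ⟨n, h⟩) (mu n) * coroot j (α (l.get ⟨n, h⟩)) ≤ 0 :=
      mul_nonpos_of_nonneg_of_nonpos (hpos n h) (hneg _)
    linarith
  have hchain : ∀ m n : ℕ, m ≤ n → n ≤ l.length → coroot j (mu m) ≤ coroot j (mu n) := by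
    intro m n hmn hn
    induction n with
    | zero => interval_cases m; exact le_refl _
    | succ k ih =>
      rcases Nat.lt_or_ge m (k + 1) with h1 | h1
      · exact le_trans (ih (by omega) (by omega)) (hmono k (by omega))
      · have : m = k + 1 := le_antisymm hmn h1
        simp [this]
  -- values
  have himt : j ∉ Ire := him
  have h1t : coroot j (mu t) = 1 := by
    have := him1 t ht (heq ▸ him)
    rwa [← heq] at this
  have h1s : coroot j (mu s) = 1 := him1 s hs him
  have hstept : coroot j (mu (t + 1)) = 1 - coroot j (α j) := by
    rw [hstep t ht]
    simp only [map_sub, map_smul, smul_eq_mul, ← heq, h1t]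
    ring
  have hle : coroot j (mu (t + 1)) ≤ coroot j (mu s) :=
    hchain (t + 1) s (by omega) (le_of_lt hs)
  rw [hstept, h1s] at hle
  have := himdiag j him
  linarith
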